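/- Let R be a commutative ℚ-algebra and let t, v be two commuting indeterminates. For every m ≥ 1, the operator Π_{k=1}^{m} (t∂_t + vt - k) applied to the constant 1 in R[t,v] equals Σ_{j=0}^{m} (-1)^{m-j} (m!/j!) (vt)^j. Equivalently, e^{-vt} ∘ (t∂_t - 1)(t∂_t - 2)⋯(t∂_t - m) ∘ e^{vt} applied to 1 equals Σ_{j=0}^{m} (-1)^{m-j} (m!/j!) v^j t^j. -/

import Mathlib

/-- One factor `(t∂_t + vt)` of the conjugated Euler operator, acting on `R[v][t]`
(inner variable `v`, outer variable `t`). -/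
noncomputable def eulerVt {R : Type*} [CommRing R]
    (q : Polynomial (Polynomial R)) : Polynomial (Polynomial R) :=
  Polynomial.X * Polynomial.derivative q + Polynomial.C Polynomial.X * Polynomial.X * q

/-- Successive application of the commuting operators `(t∂_t + vt - k)`, `k = 1,…,m`, to `1`. -/
noncomputable def fallProd {R : Type*} [CommRing R] : ℕ → Polynomial (Polynomial R)
  | 0 => 1
  | k + 1 => eulerVt (fallProd k) - (k + 1 : ℕ) • fallProd k

open Polynomial Finset

section Aux

variable {R : Type*} [CommRing R]

lemma eulerVt_sum {ι : Type*} (s : Finset ι) (f : ι → Polynomial (Polynomial R)) :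
    eulerVt (∑ i ∈ s, f i) = ∑ i ∈ s, eulerVt (f i) := by
  simp [eulerVt, map_sum, Finset.mul_sum, Finset.sum_add_distrib]

lemma eulerVt_smul [Algebra ℚ R] (c : ℚ) (p : Polynomial (Polynomial R)) :
    eulerVt (c • p) = c • eulerVt p := by
  simp [eulerVt, smul_add, mul_smul_comm]

lemma eulerVt_pow [Algebra ℚ R] (j : ℕ) :
    eulerVt ((C X * X : Polynomial (Polynomial R)) ^ j)
      = (j : ℚ) • (C X * X) ^ j + (C X * X) ^ (j + 1) := by
  cases j with
  | zero => simp [eulerVt]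
  | succ i =>
    have h1 : ((i + 1 : ℕ) : ℚ) • ((C X * X : Polynomial (Polynomial R)) ^ (i+1))
        = ((i + 1 : ℕ) : Polynomial (Polynomial R)) * (C X * X) ^ (i+1) := by
      rw [Nat.cast_smul_eq_nsmul, nsmul_eq_mul]
    push_cast at h1
    simp only [eulerVt, derivative_pow, derivative_mul, derivative_X, derivative_C, mul_one,
      zero_mul, add_zero, zero_add, Nat.add_sub_cancel, C_eq_natCast, Nat.cast_add, Nat.cast_one,
      h1, map_add, map_one, map_natCast]
    ring

/-- The coefficient `(-1)^(m-j) m!/j!`. -/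
def co (m j : ℕ) : ℚ := (-1) ^ (m - j) * m.factorial / j.factorial

lemma co_rec (m j : ℕ) (hj : j < m + 2) :
    co m j * ((j : ℚ) - (m + 1)) + (if j = 0 then 0 else co m (j - 1)) = co (m + 1) j := by
  rcases j with _ | i
  · simp only [co, if_pos rfl, Nat.sub_zero, Nat.factorial_zero, Nat.factorial_succ, pow_succ]
    push_cast
    ring
  · rw [if_neg (Nat.succ_ne_zero i)]
    have hi : i ≤ m := by omega
    obtain ⟨k, rfl⟩ := Nat.exists_eq_add_of_le hi
    rcases k with _ | l
    · simp only [co, Nat.add_zero, show i + 1 - (i + 1) = 0 from by omega,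
        show i - (i + 1) = 0 from by omega, show i + 1 + 1 - (i + 1) = 1 from by omega,
        Nat.add_sub_cancel, pow_zero, pow_one, Nat.factorial_succ]
      have h0 : ((i.factorial : ℚ)) ≠ 0 := Nat.cast_ne_zero.mpr i.factorial_ne_zero
      field_simp
      simp only [Nat.sub_self, pow_zero]; push_cast; ring
    · simp only [co, show i + (l + 1) - (i + 1) = l from by omega,
        show i + (l + 1) - i = l + 1 from by omega,
        show i + (l + 1) + 1 - (i + 1) = l + 1 from by omega,
        Nat.succ_sub_one, Nat.factorial_succ, pow_succ]
      have h0 : ((i.factorial : ℚ)) ≠ 0 := Nat.cast_ne_zero.mpr i.factorial_ne_zero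
      have h1 : (((i + (l+1)).factorial : ℚ)) ≠ 0 := Nat.cast_ne_zero.mpr (Nat.factorial_ne_zero _)
      push_cast
      field_simp
      ring

lemma fallProd_eq [Algebra ℚ R] (m : ℕ) :
    (fallProd m : Polynomial (Polynomial R))
      = ∑ j ∈ Finset.range (m + 1), co m j • (C X * X) ^ j := by
  induction m with
  | zero => simp [fallProd, co]
  | succ m ih =>
    show eulerVt (fallProd m) - (m + 1 : ℕ) • fallProd m = _
    rw [ih, eulerVt_sum]
    simp_rw [eulerVt_smul, eulerVt_pow, smul_add, smul_smul]
    rw [Finset.sum_add_distrib, ← Nat.cast_smul_eq_nsmul ℚ, Finset.smul_sum]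
    simp_rw [smul_smul]
    have key : ∀ j ∈ Finset.range (m + 2),
        co (m + 1) j • ((C X * X : Polynomial (Polynomial R)) ^ j)
          = (co m j * ((j : ℚ) - (m + 1))) • (C X * X) ^ j
            + (if j = 0 then (0:ℚ) else co m (j - 1)) • (C X * X) ^ j := fun j hj => by
      rw [← add_smul, co_rec m j (Finset.mem_range.mp hj)]
    rw [Finset.sum_congr rfl key, Finset.sum_add_distrib]
    have hz : co m (m + 1) * (((m + 1 : ℕ) : ℚ) - (m + 1)) = 0 := by push_cast; ring
    have hA : ∑ j ∈ Finset.range (m + 2),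
        (co m j * ((j : ℚ) - (m + 1))) • ((C X * X : Polynomial (Polynomial R)) ^ j)
        = ∑ j ∈ Finset.range (m + 1), (co m j * ((j : ℚ) - (m + 1))) • (C X * X) ^ j := by
      rw [Finset.sum_range_succ, hz, zero_smul, add_zero]
    have hB : ∑ j ∈ Finset.range (m + 2),
        (if j = 0 then (0:ℚ) else co m (j - 1)) • ((C X * X : Polynomial (Polynomial R)) ^ j)
        = ∑ j ∈ Finset.range (m + 1), co m j • (C X * X) ^ (j + 1) := by
      rw [Finset.sum_range_succ']
      simp
    rw [hA, hB]
    have hsplit : ∀ j : ℕ, (co m j * ((j : ℚ) - (m + 1))) • ((C X * X : Polynomial (Polynomial R)) ^ j)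
        = (co m j * j) • (C X * X) ^ j - (((m : ℚ) + 1) * co m j) • (C X * X) ^ j := fun j => by
      rw [← sub_smul]; ring_nf
    simp_rw [hsplit]
    rw [Finset.sum_sub_distrib]
    push_cast
    abel

end Aux

/-- `Π_{k=1}^m (t∂_t + vt - k)` applied to `1` equals `Σ_{j=0}^m (-1)^{m-j} (m!/j!) (vt)^j`. -/
theorem fallProd_eval {R : Type*} [CommRing R] [Algebra ℚ R] (m : ℕ) (hm : 1 ≤ m) :
    (fallProd m : Polynomial (Polynomial R)) =
      ∑ j ∈ Finset.range (m + 1),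
        ((-1 : ℚ) ^ (m - j) * (m.factorial : ℚ) / (j.factorial : ℚ)) •
          (Polynomial.C Polynomial.X * Polynomial.X) ^ j := by
  simpa only [co] using fallProd_eq (R := R) m
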